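/- Let S₁ ⊆ S₂ ⊆ B(H) be operator systems, let {H_α} be the net of finite-dimensional subspaces of H directed by inclusion with projections P_α, and suppose that for each α the compression φ_α : S₁ → P_α S₁ P_α, s ↦ P_α s P_α, extends to a ucp map φ̃_α : S₂ → P_α B(H) P_α with range in P_α T'' P_α for a fixed weak-operator closed operator system T'' containing S₁. Then any point-ultraweak cluster point φ̃ of the net {φ̃_α} is a ucp map S₂ → B(H) extending the inclusion S₁ ⊆ B(H), and the range of φ̃ is contained in T''. -/

import Mathlib

open scoped ComplexOrder

noncomputable section

variable {H : Type} [NormedAddCommGroup H] [InnerProductSpace ℂ H] [CompleteSpace H]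

/-- The net of finite-dimensional subspaces of `H`, directed by inclusion. -/
abbrev FinSubspace (H : Type) [NormedAddCommGroup H] [InnerProductSpace ℂ H] : Type :=
  {V : Submodule ℂ H // FiniteDimensional ℂ V}

/-- The orthogonal projection `P_α` onto a finite-dimensional subspace, as an
operator on `H`. -/
noncomputable def projCLM (V : FinSubspace H) : H →L[ℂ] H :=
  haveI : FiniteDimensional ℂ (V.1 : Submodule ℂ H) := V.2
  (V.1.subtypeL).comp (V.1.orthogonalProjectionOnto)

/-- The weak operator topology on `B(H)`, induced by the functionals
`T ↦ ⟪T h₁, h₂⟫`. -/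
def wotTopology : TopologicalSpace (H →L[ℂ] H) :=
  TopologicalSpace.induced
    (fun T => fun p : H × H => (inner ℂ (T p.1) p.2 : ℂ)) Pi.topologicalSpace

/-- Complete positivity of a linear map defined on an operator system
`S ⊆ B(H)` with values in `B(H)`: positive operator matrices (in the sense of the
matricial order on `B(H)`) are sent to positive operator matrices. -/
def IsCpMap (S : Submodule ℂ (H →L[ℂ] H)) (φ : S →ₗ[ℂ] (H →L[ℂ] H)) : Prop :=
  ∀ (N : ℕ) (a : Fin N → Fin N → S),
    (∀ x : Fin N → H, 0 ≤ ∑ i, ∑ j, (inner ℂ (((a i j : H →L[ℂ] H)) (x j)) (x i) : ℂ)) →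
    (∀ x : Fin N → H, 0 ≤ ∑ i, ∑ j, (inner ℂ ((φ (a i j)) (x j)) (x i) : ℂ))

/- ### Auxiliary material -/

instance : Nonempty (FinSubspace H) := ⟨⟨⊥, inferInstance⟩⟩

instance : SemilatticeSup (FinSubspace H) :=
  Subtype.semilatticeSup fun V W hV hW => by
    haveI := hV; haveI := hW
    exact Submodule.finiteDimensional_sup V W

private theorem mapClusterPt_comp' {α β γ : Type*} [tβ : TopologicalSpace β]
    [tγ : TopologicalSpace γ] {F : Filter α} {u : α → β} {x : β}
    (h : MapClusterPt x F u) {g : β → γ} (hg : Continuous g) :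
    MapClusterPt (g x) F (g ∘ u) := by
  have h0 : Filter.NeBot (nhds x ⊓ Filter.map u F) := h
  have h1 : Filter.NeBot (Filter.map g (nhds x ⊓ Filter.map u F)) := h0.map g
  refine Filter.NeBot.mono h1 ?_
  refine le_trans Filter.map_inf_le ?_
  exact inf_le_inf (hg.continuousAt (x := x)) (le_of_eq (Filter.map_map))

private theorem clusterPt_mem_closed' {α β : Type*} [TopologicalSpace β] {F : Filter α}
    {u : α → β} {x : β} (h : MapClusterPt x F u) {K : Set β} (hK : IsClosed K)
    (hu : ∀ᶠ a in F, u a ∈ K) : x ∈ K := by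
  have h1 : ClusterPt x (Filter.principal K) :=
    ClusterPt.mono h (Filter.le_principal_iff.mpr hu)
  exact hK.closure_eq ▸ mem_closure_iff_clusterPt.mpr h1

private theorem freq_pi {ι α : Type*} [SemilatticeSup α] [Nonempty α] {x : ι → ℂ}
    {u : α → ι → ℂ} (h : MapClusterPt x Filter.atTop u) (I : Finset ι) (t : ι → Set ℂ)
    (ht : ∀ i ∈ I, t i ∈ nhds (x i)) (a₀ : α) :
    ∃ a, a₀ ≤ a ∧ ∀ i ∈ I, u a i ∈ t i := by
  have hU : (⋂ i ∈ I, (fun g : ι → ℂ => g i) ⁻¹' t i) ∈ nhds x :=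
    (Filter.biInter_finset_mem I).mpr fun i hi =>
      ((continuous_apply i).continuousAt).preimage_mem_nhds (ht i hi)
  have hfreq := mapClusterPt_iff_frequently.mp h _ hU
  rcases Filter.frequently_atTop.mp hfreq a₀ with ⟨a, ha, hmem⟩
  refine ⟨a, ha, ?_⟩
  intro i hi
  have := Set.mem_iInter₂.mp hmem i hi
  exact this

private theorem isClosed_nonneg_complex : IsClosed {z : ℂ | 0 ≤ z} := by
  have : {z : ℂ | 0 ≤ z} = Complex.re ⁻¹' Set.Ici 0 ∩ Complex.im ⁻¹' {0} := by
    ext z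
    simp only [Set.mem_setOf_eq, Complex.le_def, Set.mem_inter_iff, Set.mem_preimage,
      Set.mem_Ici, Set.mem_singleton_iff, Complex.zero_re, Complex.zero_im]
    tauto
  rw [this]
  exact (isClosed_Ici.preimage Complex.continuous_re).inter
    (isClosed_singleton.preimage Complex.continuous_im)

private theorem inner_compress {V : FinSubspace H} {h₁ h₂ : H} (m1 : h₁ ∈ V.1)
    (m2 : h₂ ∈ V.1) (T : H →L[ℂ] H) :
    (inner ℂ (((projCLM V).comp (T.comp (projCLM V))) h₁) h₂ : ℂ) = inner ℂ (T h₁) h₂ := by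
  haveI : FiniteDimensional ℂ (V.1 : Submodule ℂ H) := V.2
  have hP : ∀ h ∈ V.1, projCLM V h = h := by
    intro h hh
    show V.1.starProjection h = h
    exact Submodule.starProjection_eq_self_iff.mpr hh
  simp only [ContinuousLinearMap.comp_apply]
  rw [hP h₁ m1]
  show (inner ℂ (V.1.starProjection (T h₁)) h₂ : ℂ) = _
  rw [Submodule.inner_starProjection_left_eq_right, Submodule.starProjection_eq_self_iff.mpr m2]

theorem stmt5
    (S₁ S₂ : Submodule ℂ (H →L[ℂ] H)) (hsub : S₁ ≤ S₂)
    (hS₁sa : ∀ s ∈ S₁, ContinuousLinearMap.adjoint s ∈ S₁)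
    (h1 : (1 : H →L[ℂ] H) ∈ S₁)
    (T'' : Set (H →L[ℂ] H)) (hT₁ : ∀ s ∈ S₁, s ∈ T'')
    (hTclosed : @IsClosed _ wotTopology T'')
    (φA : FinSubspace H → (S₂ →ₗ[ℂ] (H →L[ℂ] H)))
    (hcp : ∀ V, IsCpMap S₂ (φA V))
    (hcorner : ∀ V s, φA V s = (projCLM V).comp (((φA V) s).comp (projCLM V)))
    (hextend : ∀ (V) (s : S₂), (s : H →L[ℂ] H) ∈ S₁ →
      φA V s = (projCLM V).comp (((s : H →L[ℂ] H)).comp (projCLM V)))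
    (hunital : ∀ V, φA V ⟨1, hsub h1⟩ = projCLM V)
    (hrange : ∀ V s, ∃ t ∈ T'', φA V s = (projCLM V).comp (t.comp (projCLM V)))
    (φ : S₂ →ₗ[ℂ] (H →L[ℂ] H))
    (hclust : @MapClusterPt (S₂ → (H →L[ℂ] H))
      (@Pi.topologicalSpace S₂ (fun _ => H →L[ℂ] H) (fun _ => wotTopology))
      (FinSubspace H) (fun s => φ s) Filter.atTop (fun V s => φA V s)) :
    IsCpMap S₂ φ ∧ φ ⟨1, hsub h1⟩ = 1 ∧
      (∀ s : S₂, (s : H →L[ℂ] H) ∈ S₁ → φ s = (s : H →L[ℂ] H)) ∧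
      ∀ s, φ s ∈ T'' := by
  classical
  letI tw : TopologicalSpace (H →L[ℂ] H) := wotTopology
  -- the global evaluation map into a product of copies of ℂ
  set G : (S₂ → (H →L[ℂ] H)) → (S₂ × H × H) → ℂ :=
    fun f q => inner ℂ (f q.1 q.2.1) q.2.2 with hGdef
  have hGcont : Continuous G := by
    apply continuous_pi
    intro q
    have hev : Continuous fun f : S₂ → (H →L[ℂ] H) => f q.1 := continuous_apply q.1
    have hpair : Continuous fun T : H →L[ℂ] H => fun p : H × H => (inner ℂ (T p.1) p.2 : ℂ) :=
      continuous_induced_dom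
    have hev2 : Continuous fun c : (H × H) → ℂ => c (q.2.1, q.2.2) := continuous_apply _
    exact (hev2.comp hpair).comp hev
  have hclust' : MapClusterPt (G (fun s => φ s)) Filter.atTop
      (G ∘ (fun V s => φA V s)) := mapClusterPt_comp' hclust hGcont
  -- the extension property
  have hext : ∀ s : S₂, (s : H →L[ℂ] H) ∈ S₁ → φ s = (s : H →L[ℂ] H) := by
    intro s hs
    apply ContinuousLinearMap.ext
    intro h₁
    apply ext_inner_right ℂ
    intro h₂
    have hevcont : Continuous fun g : (S₂ × H × H) → ℂ => g (s, h₁, h₂) := continuous_apply _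
    have hq := mapClusterPt_comp' hclust' hevcont
    have hev : ∀ᶠ V in (Filter.atTop : Filter (FinSubspace H)),
        ((fun g : (S₂ × H × H) → ℂ => g (s, h₁, h₂)) ∘ (G ∘ fun V s => φA V s)) V
          ∈ ({(inner ℂ ((s : H →L[ℂ] H) h₁) h₂ : ℂ)} : Set ℂ) := by
      refine Filter.eventually_atTop.mpr
        ⟨⟨Submodule.span ℂ {h₁, h₂}, FiniteDimensional.span_of_finite ℂ (Set.toFinite _)⟩, ?_⟩
      intro V hV
      have hVle : Submodule.span ℂ {h₁, h₂} ≤ V.1 := hV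
      have m1 : h₁ ∈ V.1 := hVle (Submodule.subset_span (by simp))
      have m2 : h₂ ∈ V.1 := hVle (Submodule.subset_span (by simp))
      show (inner ℂ (φA V s h₁) h₂ : ℂ) ∈ _
      rw [hextend V s hs]
      simp only [Set.mem_singleton_iff]
      exact inner_compress m1 m2 _
    have := clusterPt_mem_closed' hq isClosed_singleton hev
    exact Set.mem_singleton_iff.mp this
  -- complete positivity
  have hcpφ : IsCpMap S₂ φ := by
    intro N a hpos x
    have hsum : Continuous (fun g : (S₂ × H × H) → ℂ =>
        ∑ i : Fin N, ∑ j : Fin N, g (a i j, x j, x i)) := by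
      refine continuous_finset_sum _ fun i _ => continuous_finset_sum _ fun j _ => ?_
      exact continuous_apply _
    have hq := mapClusterPt_comp' hclust' hsum
    have hev : ∀ᶠ V in (Filter.atTop : Filter (FinSubspace H)),
        ((fun g : (S₂ × H × H) → ℂ => ∑ i : Fin N, ∑ j : Fin N, g (a i j, x j, x i)) ∘
          (G ∘ fun V s => φA V s)) V ∈ {z : ℂ | 0 ≤ z} :=
      Filter.Eventually.of_forall fun V => hcp V N a hpos x
    exact clusterPt_mem_closed' hq isClosed_nonneg_complex hev
  -- range in T''
  have hmemT : ∀ s : S₂, φ s ∈ T'' := by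
    intro s
    have hclos : φ s ∈ closure T'' := by
      rw [mem_closure_iff_nhds]
      intro U hU
      have hU' : U ∈ Filter.comap
          (fun T : H →L[ℂ] H => fun p : H × H => (inner ℂ (T p.1) p.2 : ℂ))
          (nhds (fun p : H × H => (inner ℂ ((φ s) p.1) p.2 : ℂ))) := by
        rw [← nhds_induced]
        exact hU
      rcases Filter.mem_comap.mp hU' with ⟨W, hW, hWsub⟩
      rw [nhds_pi] at hW
      rcases Filter.mem_pi'.mp hW with ⟨I, t, ht, htW⟩
      -- span of all vectors occurring in I
      have hfin : (Set.Finite ((Prod.fst '' (I : Set (H × H))) ∪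
          (Prod.snd '' (I : Set (H × H))))) :=
        ((I.finite_toSet.image _).union (I.finite_toSet.image _))
      set V₀ : FinSubspace H :=
        ⟨Submodule.span ℂ ((Prod.fst '' (I : Set (H × H))) ∪ (Prod.snd '' (I : Set (H × H)))),
          FiniteDimensional.span_of_finite ℂ hfin⟩ with hV₀def
      set I' : Finset (S₂ × H × H) := I.image (fun p => (s, p)) with hI'def
      have hfreq := freq_pi hclust' I' (fun q => t (q.2.1, q.2.2)) ?_ V₀
      · rcases hfreq with ⟨V, hV, hmem⟩
        rcases hrange V s with ⟨tV, htV, heq⟩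
        refine ⟨tV, ?_, htV⟩
        apply hWsub
        show (fun p : H × H => (inner ℂ (tV p.1) p.2 : ℂ)) ∈ W
        apply htW
        rw [Set.mem_pi]
        intro p hp
        have hp' : p ∈ I := hp
        have hVle : V₀.1 ≤ V.1 := hV
        have m1 : p.1 ∈ V.1 := hVle (Submodule.subset_span
          (Set.mem_union_left _ ⟨p, hp', rfl⟩))
        have m2 : p.2 ∈ V.1 := hVle (Submodule.subset_span
          (Set.mem_union_right _ ⟨p, hp', rfl⟩))
        have key : (inner ℂ (tV p.1) p.2 : ℂ) = inner ℂ (φA V s p.1) p.2 := by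
          rw [heq]
          exact (inner_compress m1 m2 tV).symm
        rw [key]
        have := hmem (s, p) (Finset.mem_image_of_mem _ hp')
        exact this
      · intro q hq
        rcases Finset.mem_image.mp hq with ⟨p, hp, rfl⟩
        exact ht p
    rwa [hTclosed.closure_eq] at hclos
  refine ⟨hcpφ, ?_, hext, hmemT⟩
  exact hext ⟨1, hsub h1⟩ h1
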